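/- arXiv:math/0605747 — 2 statements merged into one kernel-verified Lean document; each statement's English description precedes it below -/
import Mathlib

section
/- The set E of all x ∈ [0,1] with bounded O¹-symbols (i.e., for which there exists K with g_k(x) ≤ K for all k) has Lebesgue measure 0. Consequently, for Lebesgue almost every x ∈ [0,1], limsup_{k→∞} g_k(x) = ∞. -/
open MeasureTheory
open scoped Nat

noncomputable def osig (g : ℕ → ℕ) (k : ℕ) : ℝ := ∑ i ∈ Finset.range k, (g i : ℝ)

noncomputable def bO1inf (g : ℕ → ℕ) : ℝ :=
  ∑' n : ℕ, (-1 : ℝ) ^ n / ∏ k ∈ Finset.range (n + 1), osig g (k + 1)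

namespace O1aux

noncomputable def term (g : ℕ → ℕ) (j : ℕ) : ℝ :=
  (-1 : ℝ) ^ j / ∏ k ∈ Finset.range (j + 1), osig g (k + 1)

lemma bO1inf_eq (g : ℕ → ℕ) : bO1inf g = ∑' j, term g j := rfl

lemma osig_ge (g : ℕ → ℕ) (hg : ∀ n, 0 < g n) (k : ℕ) : (k : ℝ) ≤ osig g k := by
  have : ∀ i ∈ Finset.range k, (1 : ℝ) ≤ (g i : ℝ) := by
    intro i _
    exact_mod_cast hg i
  calc (k : ℝ) = ∑ _i ∈ Finset.range k, (1 : ℝ) := by simp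
    _ ≤ osig g k := Finset.sum_le_sum this

lemma fact_le_prod (g : ℕ → ℕ) (hg : ∀ n, 0 < g n) (j : ℕ) :
    ((j + 1)! : ℝ) ≤ ∏ k ∈ Finset.range (j + 1), osig g (k + 1) := by
  have h1 : ((j + 1)! : ℝ) = ∏ k ∈ Finset.range (j + 1), ((k : ℝ) + 1) := by
    rw [← Finset.prod_range_add_one_eq_factorial]
    push_cast
    ring_nf
  rw [h1]
  apply Finset.prod_le_prod
  · intro k _; positivity
  · intro k _
    have := osig_ge g hg (k + 1)
    push_cast at this ⊢
    linarith

lemma prod_pos (g : ℕ → ℕ) (hg : ∀ n, 0 < g n) (j : ℕ) :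
    0 < ∏ k ∈ Finset.range (j + 1), osig g (k + 1) := by
  have h := fact_le_prod g hg j
  have : (0 : ℝ) < ((j + 1)! : ℝ) := by positivity
  linarith

lemma abs_term_le (g : ℕ → ℕ) (hg : ∀ n, 0 < g n) (j : ℕ) :
    |term g j| ≤ 1 / ((j + 1)! : ℝ) := by
  have hp := prod_pos g hg j
  have hf := fact_le_prod g hg j
  have hfpos : (0 : ℝ) < ((j + 1)! : ℝ) := by positivity
  rw [term, abs_div, abs_pow, abs_neg, abs_one, one_pow, abs_of_pos hp]
  exact one_div_le_one_div_of_le hfpos hf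

lemma summable_aux : Summable (fun j : ℕ => 1 / ((j + 1)! : ℝ)) := by
  have h : Summable (fun n : ℕ => (1 : ℝ) ^ n / n !) := Real.summable_pow_div_factorial 1
  have hinj : Function.Injective Nat.succ := fun a b hab => by omega
  have := h.comp_injective hinj
  simpa [Function.comp_def] using this

lemma summable_term (g : ℕ → ℕ) (hg : ∀ n, 0 < g n) : Summable (term g) := by
  apply Summable.of_abs
  apply Summable.of_nonneg_of_le (fun j => abs_nonneg _) (abs_term_le g hg)
  exact summable_aux

lemma term_congr (n : ℕ) (g g' : ℕ → ℕ) (hagree : ∀ i < n, g i = g' i)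
    {j : ℕ} (hj : j < n) : term g j = term g' j := by
  unfold term
  congr 1
  apply Finset.prod_congr rfl
  intro k hk
  unfold osig
  apply Finset.sum_congr rfl
  intro i hi
  simp only [Finset.mem_range] at hk hi
  rw [hagree i (by omega)]

lemma key_nat (n j : ℕ) (hj : n ≤ j) : (n + 1)! * 2 ^ (j - n) ≤ (j + 1)! := by
  calc (n + 1)! * 2 ^ (j - n) ≤ (n + 1)! * (n + 2) ^ (j - n) := by
        apply Nat.mul_le_mul_left
        exact Nat.pow_le_pow_left (by omega) _
    _ ≤ (n + 1 + (j - n))! := Nat.factorial_mul_pow_le_factorial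
    _ = (j + 1)! := by congr 1; omega

set_option maxHeartbeats 1000000 in
lemma dist_le (n : ℕ) (g g' : ℕ → ℕ) (hg : ∀ k, 0 < g k) (hg' : ∀ k, 0 < g' k)
    (hagree : ∀ i < n, g i = g' i) :
    |bO1inf g - bO1inf g'| ≤ 4 * 2 ^ n / ((n + 1)! : ℝ) := by
  set C : ℝ := 2 * 2 ^ n / ((n + 1)! : ℝ) with hC
  have hCpos : 0 ≤ C := by positivity
  have hfn : (0 : ℝ) < ((n + 1)! : ℝ) := by positivity
  have hbound : ∀ j, |term g j - term g' j| ≤ C * (1 / 2 : ℝ) ^ j := by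
    intro j
    rcases lt_or_ge j n with hj | hj
    · rw [term_congr n g g' hagree hj, sub_self, abs_zero]
      positivity
    · have h1 := abs_term_le g hg j
      have h2 := abs_term_le g' hg' j
      have h3 : |term g j - term g' j| ≤ 2 / ((j + 1)! : ℝ) := by
        calc |term g j - term g' j| ≤ |term g j| + |term g' j| := abs_sub _ _
          _ ≤ 1 / ((j + 1)! : ℝ) + 1 / ((j + 1)! : ℝ) := add_le_add h1 h2
          _ = 2 / ((j + 1)! : ℝ) := by ring
      refine h3.trans ?_
      have hkey : ((n + 1)! : ℝ) * 2 ^ (j - n) ≤ ((j + 1)! : ℝ) := by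
        exact_mod_cast key_nat n j hj
      have hfj : (0 : ℝ) < ((j + 1)! : ℝ) := by positivity
      have h2j : (2 : ℝ) ^ j = 2 ^ n * 2 ^ (j - n) := by
        rw [← pow_add]; congr 1; omega
      rw [hC, div_pow, one_pow, div_mul_div_comm, mul_one, div_le_div_iff₀ hfj (by positivity)]
      calc 2 * (((n + 1)! : ℝ) * 2 ^ j) = 2 * 2 ^ n * (((n + 1)! : ℝ) * 2 ^ (j - n)) := by
            rw [h2j]; ring
        _ ≤ 2 * 2 ^ n * ((j + 1)! : ℝ) := by
            apply mul_le_mul_of_nonneg_left hkey (by positivity)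
  have hsum_geo : Summable (fun j : ℕ => C * (1 / 2 : ℝ) ^ j) :=
    (summable_geometric_of_lt_one (by norm_num) (by norm_num)).mul_left C
  have hsub : Summable (fun j => term g j - term g' j) :=
    (summable_term g hg).sub (summable_term g' hg')
  have habs : Summable (fun j => |term g j - term g' j|) := hsub.abs
  have h1 : |bO1inf g - bO1inf g'| ≤ ∑' j, |term g j - term g' j| := by
    rw [bO1inf_eq, bO1inf_eq, ← Summable.tsum_sub (summable_term g hg) (summable_term g' hg')]
    calc |∑' j, (term g j - term g' j)| = ‖∑' j, (term g j - term g' j)‖ :=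
          (Real.norm_eq_abs _).symm
      _ ≤ ∑' j, ‖term g j - term g' j‖ :=
          norm_tsum_le_tsum_norm (by simpa [Real.norm_eq_abs] using habs)
      _ = ∑' j, |term g j - term g' j| := by simp [Real.norm_eq_abs]
  have h2 : ∑' j, |term g j - term g' j| ≤ ∑' j, C * (1 / 2 : ℝ) ^ j :=
    Summable.tsum_le_tsum hbound habs hsum_geo
  have h3 : ∑' j, C * (1 / 2 : ℝ) ^ j = C * 2 := by
    rw [tsum_mul_left, tsum_geometric_of_lt_one (by norm_num) (by norm_num)]
    norm_num
  rw [h3] at h2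
  have : C * 2 = 4 * 2 ^ n / ((n + 1)! : ℝ) := by rw [hC]; ring
  linarith [h1, h2, this ▸ h2]

/-- the set of values with symbols bounded by `m` -/
def Fset (m : ℕ) : Set ℝ :=
  {x : ℝ | ∃ g : ℕ → ℕ, (∀ k, 0 < g k ∧ g k ≤ m) ∧ x = bO1inf g}

noncomputable def ext (n : ℕ) (v : Fin n → ℕ) : ℕ → ℕ :=
  fun i => if h : i < n then v ⟨i, h⟩ else 1

lemma Fset_subset (m n : ℕ) :
    Fset m ⊆ ⋃ v ∈ Fintype.piFinset (fun _ : Fin n => Finset.Icc 1 m),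
      Metric.closedBall (bO1inf (ext n v)) (4 * 2 ^ n / ((n + 1)! : ℝ)) := by
  rintro x ⟨g, hg, rfl⟩
  have hv : (fun i : Fin n => g i) ∈ Fintype.piFinset (fun _ : Fin n => Finset.Icc 1 m) := by
    rw [Fintype.mem_piFinset]
    intro i
    rw [Finset.mem_Icc]
    exact ⟨(hg i).1, (hg i).2⟩
  apply Set.mem_biUnion hv
  · rw [Metric.mem_closedBall, Real.dist_eq]
    apply dist_le n g (ext n (fun i : Fin n => g i)) (fun k => (hg k).1)
    · intro k
      unfold ext
      split
      · exact (hg k).1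
      · norm_num
    · intro i hi
      simp [ext, hi]

lemma Fset_null (m : ℕ) : volume (Fset m) = 0 := by
  have hbound : ∀ n : ℕ, volume (Fset m) ≤
      ENNReal.ofReal ((m : ℝ) ^ n * (8 * 2 ^ n / ((n + 1)! : ℝ))) := by
    intro n
    have h1 := measure_mono (μ := volume) (Fset_subset m n)
    have h2 : volume (⋃ v ∈ Fintype.piFinset (fun _ : Fin n => Finset.Icc 1 m),
        Metric.closedBall (bO1inf (ext n v)) (4 * 2 ^ n / ((n + 1)! : ℝ))) ≤
        ∑ v ∈ Fintype.piFinset (fun _ : Fin n => Finset.Icc 1 m),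
          volume (Metric.closedBall (bO1inf (ext n v)) (4 * 2 ^ n / ((n + 1)! : ℝ))) :=
      measure_biUnion_finset_le _ _
    have h3 : ∀ v : Fin n → ℕ,
        volume (Metric.closedBall (bO1inf (ext n v)) (4 * 2 ^ n / ((n + 1)! : ℝ))) =
        ENNReal.ofReal (2 * (4 * 2 ^ n / ((n + 1)! : ℝ))) := by
      intro v
      rw [Real.volume_closedBall]
    have hcard : (Fintype.piFinset (fun _ : Fin n => Finset.Icc 1 m)).card = m ^ n := by
      simp [Fintype.card_piFinset]
    calc volume (Fset m) ≤ _ := h1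
      _ ≤ _ := h2
      _ = (m ^ n : ℕ) * ENNReal.ofReal (2 * (4 * 2 ^ n / ((n + 1)! : ℝ))) := by
          rw [Finset.sum_congr rfl (fun v _ => h3 v), Finset.sum_const, hcard, nsmul_eq_mul]
      _ = ENNReal.ofReal ((m : ℝ) ^ n * (8 * 2 ^ n / ((n + 1)! : ℝ))) := by
          rw [← ENNReal.ofReal_natCast (m ^ n), ← ENNReal.ofReal_mul (by positivity)]
          congr 1
          push_cast
          ring
  have htends : Filter.Tendsto
      (fun n : ℕ => ENNReal.ofReal ((m : ℝ) ^ n * (8 * 2 ^ n / ((n + 1)! : ℝ))))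
      Filter.atTop (nhds 0) := by
    rw [← ENNReal.ofReal_zero]
    apply ENNReal.tendsto_ofReal
    have hmain : Filter.Tendsto (fun n : ℕ => 8 * ((2 * m : ℝ) ^ n / (n ! : ℝ)))
        Filter.atTop (nhds 0) := by
      have := FloorSemiring.tendsto_pow_div_factorial_atTop (2 * m : ℝ)
      simpa using this.const_mul 8
    apply squeeze_zero (fun n => by positivity)
    · intro n
      show (m : ℝ) ^ n * (8 * 2 ^ n / ((n + 1)! : ℝ)) ≤ 8 * ((2 * m : ℝ) ^ n / (n ! : ℝ))
      have hfn : (0 : ℝ) < (n ! : ℝ) := by positivity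
      have hfn1 : (0 : ℝ) < ((n + 1)! : ℝ) := by positivity
      have hle : (n ! : ℝ) ≤ ((n + 1)! : ℝ) := by
        exact_mod_cast Nat.factorial_le (by omega)
      have h1 : (1 : ℝ) / ((n + 1)! : ℝ) ≤ 1 / (n ! : ℝ) :=
        one_div_le_one_div_of_le hfn hle
      have hmn : (0 : ℝ) ≤ (m : ℝ) ^ n * (8 * 2 ^ n) := by positivity
      calc (m : ℝ) ^ n * (8 * 2 ^ n / ((n + 1)! : ℝ))
          = (m : ℝ) ^ n * (8 * 2 ^ n) * (1 / ((n + 1)! : ℝ)) := by ring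
        _ ≤ (m : ℝ) ^ n * (8 * 2 ^ n) * (1 / (n ! : ℝ)) :=
            mul_le_mul_of_nonneg_left h1 hmn
        _ = 8 * ((2 * m : ℝ) ^ n / (n ! : ℝ)) := by rw [mul_pow]; ring
    · exact hmain
  exact le_antisymm (ge_of_tendsto' htends hbound) (zero_le)

end O1aux

/-- the set `E` of `x ∈ [0,1]` with bounded O¹-symbols has Lebesgue
measure `0`; consequently, for Lebesgue-a.e. `x ∈ [0,1]`, `limsup_k g_k(x) = ∞`. -/
theorem o1_bounded_symbols_null :
    volume {x : ℝ | x ∈ Set.Icc (0 : ℝ) 1 ∧ ∃ g : ℕ → ℕ, (∀ n, 0 < g n) ∧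
      x = bO1inf g ∧ ∃ K, ∀ k, g k ≤ K} = 0 ∧
    (∀ᵐ x ∂(volume : Measure ℝ), x ∈ Set.Icc (0 : ℝ) 1 →
      ∀ g : ℕ → ℕ, (∀ n, 0 < g n) → x = bO1inf g →
        Filter.limsup (fun k => (g k : ℕ∞)) Filter.atTop = ⊤) := by
  set E : Set ℝ := {x : ℝ | x ∈ Set.Icc (0 : ℝ) 1 ∧ ∃ g : ℕ → ℕ, (∀ n, 0 < g n) ∧
      x = bO1inf g ∧ ∃ K, ∀ k, g k ≤ K} with hE
  have hnull : volume E = 0 := by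
    have hsub : E ⊆ ⋃ m : ℕ, O1aux.Fset m := by
      rintro x ⟨_, g, hgpos, hx, K, hK⟩
      exact Set.mem_iUnion.mpr ⟨K, g, fun k => ⟨hgpos k, hK k⟩, hx⟩
    exact measure_mono_null hsub (measure_iUnion_null O1aux.Fset_null)
  refine ⟨hnull, ?_⟩
  have hae : ∀ᵐ x ∂(volume : Measure ℝ), x ∉ E := by
    rw [ae_iff]
    simpa using hnull
  filter_upwards [hae] with x hx hIcc g hgpos hrep
  have hnb : ¬ ∃ K, ∀ k, g k ≤ K := by
    intro h
    exact hx ⟨hIcc, g, hgpos, hrep, h⟩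
  push_neg at hnb
  -- show limsup = ⊤
  rw [Filter.limsup_eq]
  rw [sInf_eq_top]
  intro a ha
  simp only [Set.mem_setOf_eq, Filter.eventually_atTop] at ha
  obtain ⟨N, hN⟩ := ha
  by_contra hne
  lift a to ℕ using hne
  set M := a + ∑ i ∈ Finset.range N, g i with hM
  obtain ⟨k, hk⟩ := hnb M
  have hkN : N ≤ k := by
    by_contra h
    push_neg at h
    have : g k ≤ ∑ i ∈ Finset.range N, g i :=
      Finset.single_le_sum (fun i _ => Nat.zero_le _) (Finset.mem_range.mpr h)
    omega
  have := hN k hkN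
  have hga : g k ≤ a := by exact_mod_cast this
  omega
end

section
/- Let (a_n) be an increasing sequence of positive integers with a_{n+1} − a_n ≤ d for all n, for some fixed integer d ≥ 2, and let V = ℕ \ {a_1, a_2, …}. Then the set C[V] of all x ∈ [0,1] with g_n(x) ∈ V for all n has Lebesgue measure 0. In particular, if V is the set of all odd (or all even) positive integers, λ(C[V]) = 0. -/
open MeasureTheory

namespace O1CV

open Filter Topology

attribute [local instance] Classical.propDecidable

noncomputable def Qp (g : ℕ → ℕ) (k : ℕ) : ℝ := ∏ j ∈ Finset.range k, osig g (j + 1)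

noncomputable def sval (g : ℕ → ℕ) (k : ℕ) : ℝ :=
  ∑ n ∈ Finset.range k, (-1 : ℝ) ^ n / Qp g (n + 1)

noncomputable def clen (g : ℕ → ℕ) (k : ℕ) : ℝ := 1 / (Qp g k * (osig g k + 1))

lemma osig_nonneg (g : ℕ → ℕ) (k : ℕ) : 0 ≤ osig g k :=
  Finset.sum_nonneg fun i _ => by positivity

lemma osig_succ (g : ℕ → ℕ) (k : ℕ) : osig g (k + 1) = osig g k + g k :=
  Finset.sum_range_succ _ _

lemma one_le_osig {g : ℕ → ℕ} (hg : 0 < g 0) (k : ℕ) : 1 ≤ osig g (k + 1) := by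
  have h0 : (1 : ℝ) ≤ (g 0 : ℝ) := by exact_mod_cast hg
  refine h0.trans ?_
  exact Finset.single_le_sum (f := fun i => (g i : ℝ)) (fun i _ => by positivity)
    (Finset.mem_range.2 (Nat.succ_pos k))

lemma le_osig {g : ℕ → ℕ} (hg : ∀ i, 0 < g i) (k : ℕ) : (k : ℝ) ≤ osig g k := by
  calc (k : ℝ) = ∑ _i ∈ Finset.range k, (1 : ℝ) := by simp
    _ ≤ osig g k := Finset.sum_le_sum fun i _ => by exact_mod_cast hg i

lemma Qp_succ (g : ℕ → ℕ) (k : ℕ) : Qp g (k + 1) = Qp g k * osig g (k + 1) :=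
  Finset.prod_range_succ _ _

lemma Qp_nonneg (g : ℕ → ℕ) (k : ℕ) : 0 ≤ Qp g k :=
  Finset.prod_nonneg fun j _ => osig_nonneg g (j + 1)

lemma one_le_Qp {g : ℕ → ℕ} : ∀ {k : ℕ}, (∀ i < k, 0 < g i) → 1 ≤ Qp g k
  | 0, _ => by simp [Qp]
  | k + 1, hg => by
    rw [Qp_succ]
    have h1 : 1 ≤ Qp g k := one_le_Qp fun i hi => hg i (hi.trans (Nat.lt_succ_self k))
    have h2 : 1 ≤ osig g (k + 1) := one_le_osig (hg 0 (Nat.succ_pos k)) k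
    nlinarith

lemma one_le_Qp' {g : ℕ → ℕ} (hg : ∀ i, 0 < g i) (k : ℕ) : 1 ≤ Qp g k :=
  one_le_Qp fun i _ => hg i

lemma Qp_pos {g : ℕ → ℕ} {k : ℕ} (hg : ∀ i < k, 0 < g i) : 0 < Qp g k :=
  lt_of_lt_of_le one_pos (one_le_Qp hg)

lemma clen_nonneg (g : ℕ → ℕ) (k : ℕ) : 0 ≤ clen g k := by
  apply one_div_nonneg.2
  have := Qp_nonneg g k
  have := osig_nonneg g k
  nlinarith

lemma two_pow_le_Qp {g : ℕ → ℕ} (hg : ∀ i, 0 < g i) : ∀ n, (2 : ℝ) ^ n ≤ Qp g (n + 1)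
  | 0 => by
      have := one_le_osig (hg 0) 0
      simpa [Qp] using this
  | n + 1 => by
      have h1 := two_pow_le_Qp hg n
      have h2 : (2 : ℝ) ≤ osig g (n + 2) := by
        have := le_osig hg (n + 2)
        have h3 : (2 : ℝ) ≤ ((n + 2 : ℕ) : ℝ) := by exact_mod_cast Nat.le_add_left 2 n
        linarith
      rw [Qp_succ]
      have h4 : (0 : ℝ) ≤ 2 ^ n := by positivity
      calc (2 : ℝ) ^ (n + 1) = 2 ^ n * 2 := by ring
        _ ≤ Qp g (n + 1) * osig g (n + 2) := by nlinarith

lemma summable_inv_Qp {g : ℕ → ℕ} (hg : ∀ i, 0 < g i) (k : ℕ) :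
    Summable (fun n => 1 / Qp g (n + k + 1)) := by
  refine Summable.of_nonneg_of_le (fun n => ?_) (fun n => ?_) summable_geometric_two
  · exact one_div_nonneg.2 (Qp_nonneg g _)
  · have h1 : (2 : ℝ) ^ n ≤ Qp g (n + k + 1) := by
      calc (2 : ℝ) ^ n ≤ 2 ^ (n + k) := by
            apply pow_le_pow_right₀ (by norm_num) (Nat.le_add_right n k)
        _ ≤ Qp g (n + k + 1) := two_pow_le_Qp hg (n + k)
    have h2 : (0 : ℝ) < 2 ^ n := by positivity
    calc 1 / Qp g (n + k + 1) ≤ 1 / 2 ^ n := one_div_le_one_div_of_le h2 h1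
      _ = (1 / 2 : ℝ) ^ n := by rw [div_pow, one_pow]

lemma summable_signed {g : ℕ → ℕ} (hg : ∀ i, 0 < g i) (k : ℕ) :
    Summable (fun n => (-1 : ℝ) ^ n * (1 / Qp g (n + k + 1))) := by
  apply Summable.of_abs
  have : (fun n => |(-1 : ℝ) ^ n * (1 / Qp g (n + k + 1))|) =
      fun n => 1 / Qp g (n + k + 1) := by
    funext n
    rw [abs_mul, abs_pow, abs_neg, abs_one, one_pow, one_mul,
      abs_of_nonneg (one_div_nonneg.2 (Qp_nonneg g _))]
  rw [this]
  exact summable_inv_Qp hg k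

lemma summable_bO1 {g : ℕ → ℕ} (hg : ∀ i, 0 < g i) :
    Summable (fun n => (-1 : ℝ) ^ n / Qp g (n + 1)) := by
  have := summable_signed hg 0
  simpa [mul_one_div, div_eq_mul_inv] using this

lemma alt_tsum_nonneg_le {b : ℕ → ℝ} (hb : Summable b) (h0 : ∀ n, 0 ≤ b n)
    (hmono : ∀ n, b (n + 1) ≤ b n) :
    0 ≤ (∑' n, (-1 : ℝ) ^ n * b n) ∧ (∑' n, (-1 : ℝ) ^ n * b n) ≤ b 0 := by
  have hi1 : Function.Injective (fun m : ℕ => 2 * m) := fun x y h => by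
    have h' : 2 * x = 2 * y := h
    omega
  have hi2 : Function.Injective (fun m : ℕ => 2 * m + 1) := fun x y h => by
    have h' : 2 * x + 1 = 2 * y + 1 := h
    omega
  have hi3 : Function.Injective (fun m : ℕ => 2 * m + 2) := fun x y h => by
    have h' : 2 * x + 2 = 2 * y + 2 := h
    omega
  have hse : Summable (fun m => b (2 * m)) := hb.comp_injective hi1
  have hso : Summable (fun m => b (2 * m + 1)) := hb.comp_injective hi2
  have hsc : Summable (fun m => b (2 * m + 2)) := hb.comp_injective hi3
  have heq : ∀ m, ((-1 : ℝ)) ^ (2 * m) * b (2 * m) = b (2 * m) := fun m => by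
    rw [pow_mul]; norm_num
  have hoq : ∀ m, ((-1 : ℝ)) ^ (2 * m + 1) * b (2 * m + 1) = -b (2 * m + 1) := fun m => by
    rw [pow_succ, pow_mul]; norm_num
  have hsE : Summable (fun m => ((-1 : ℝ)) ^ (2 * m) * b (2 * m)) := by
    refine hse.congr fun m => (heq m).symm
  have hsO : Summable (fun m => ((-1 : ℝ)) ^ (2 * m + 1) * b (2 * m + 1)) := by
    refine (hso.neg).congr fun m => (hoq m).symm
  have hEO : (∑' m, ((-1 : ℝ)) ^ (2 * m) * b (2 * m)) +
      (∑' m, ((-1 : ℝ)) ^ (2 * m + 1) * b (2 * m + 1)) = ∑' n, (-1 : ℝ) ^ n * b n :=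
    tsum_even_add_odd (f := fun n => (-1 : ℝ) ^ n * b n) hsE hsO
  have hkey : ∑' n, (-1 : ℝ) ^ n * b n =
      (∑' m, b (2 * m)) - (∑' m, b (2 * m + 1)) := by
    rw [← hEO, tsum_congr heq, tsum_congr hoq, tsum_neg]
    ring
  have hBA : (∑' m, b (2 * m + 1)) ≤ ∑' m, b (2 * m) :=
    Summable.tsum_le_tsum (fun m => hmono (2 * m)) hso hse
  have hA0 : (∑' m, b (2 * m)) = b 0 + ∑' m, b (2 * m + 2) := by
    rw [Summable.tsum_eq_zero_add hse]
    have e1 : b (2 * 0) = b 0 := by norm_num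
    have e2 : (∑' m, b (2 * (m + 1))) = ∑' m, b (2 * m + 2) :=
      tsum_congr fun m => by rw [show 2 * (m + 1) = 2 * m + 2 from by ring]
    rw [e1, e2]
  have hCB : (∑' m, b (2 * m + 2)) ≤ ∑' m, b (2 * m + 1) :=
    Summable.tsum_le_tsum (fun m => hmono (2 * m + 1)) hsc hso
  constructor
  · rw [hkey]; linarith
  · rw [hkey, hA0]; linarith

lemma bO1inf_eq_add {g : ℕ → ℕ} (hg : ∀ i, 0 < g i) (k : ℕ) :
    bO1inf g = sval g k + (-1 : ℝ) ^ k * ∑' n, (-1 : ℝ) ^ n * (1 / Qp g (n + k + 1)) := by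
  have hsum := summable_bO1 hg
  have h1 : bO1inf g = ∑' n, (-1 : ℝ) ^ n / Qp g (n + 1) := rfl
  rw [h1, ← Summable.sum_add_tsum_nat_add k hsum]
  congr 1
  rw [← tsum_mul_left]
  exact tsum_congr fun n => by rw [pow_add]; ring

lemma abs_sub_sval_le {g : ℕ → ℕ} (hg : ∀ i, 0 < g i) (k : ℕ) :
    |bO1inf g - sval g k| ≤ 1 / Qp g (k + 1) := by
  rw [bO1inf_eq_add hg k, add_sub_cancel_left, abs_mul, abs_pow, abs_neg, abs_one, one_pow,
    one_mul]
  have hb : Summable (fun n => 1 / Qp g (n + k + 1)) := summable_inv_Qp hg k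
  have h0 : ∀ n, 0 ≤ 1 / Qp g (n + k + 1) := fun n => one_div_nonneg.2 (Qp_nonneg g _)
  have hm : ∀ n, 1 / Qp g (n + 1 + k + 1) ≤ 1 / Qp g (n + k + 1) := by
    intro n
    have h2 : n + 1 + k + 1 = (n + k + 1) + 1 := by omega
    rw [h2, Qp_succ]
    have hQ : 0 < Qp g (n + k + 1) := Qp_pos fun i _ => hg i
    have ho : 1 ≤ osig g (n + k + 1 + 1) := one_le_osig (hg 0) _
    apply one_div_le_one_div_of_le hQ
    nlinarith
  obtain ⟨hge, hle⟩ := alt_tsum_nonneg_le hb h0 hm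
  rw [abs_of_nonneg hge]
  simpa using hle

lemma inv_Qp_succ_le_clen {g : ℕ → ℕ} (hg : ∀ i, 0 < g i) (k : ℕ) :
    1 / Qp g (k + 1) ≤ clen g k := by
  unfold clen
  have hQ : 0 < Qp g k := Qp_pos fun i _ => hg i
  have hm : 0 ≤ osig g k := osig_nonneg g k
  have h1 : (1 : ℝ) ≤ g k := by exact_mod_cast hg k
  have hkey : Qp g k * (osig g k + 1) ≤ Qp g (k + 1) := by
    rw [Qp_succ, osig_succ]
    nlinarith
  apply one_div_le_one_div_of_le _ hkey
  nlinarith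

lemma mem_cball {g : ℕ → ℕ} (hg : ∀ i, 0 < g i) (k : ℕ) :
    |bO1inf g - sval g k| ≤ clen g k :=
  (abs_sub_sval_le hg k).trans (inv_Qp_succ_le_clen hg k)

lemma osig_congr {g g' : ℕ → ℕ} {k j : ℕ} (h : ∀ i < k, g' i = g i) (hj : j ≤ k) :
    osig g' j = osig g j :=
  Finset.sum_congr rfl fun i hi => by rw [h i (lt_of_lt_of_le (Finset.mem_range.1 hi) hj)]

lemma Qp_congr {g g' : ℕ → ℕ} {k j : ℕ} (h : ∀ i < k, g' i = g i) (hj : j ≤ k) :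
    Qp g' j = Qp g j :=
  Finset.prod_congr rfl fun i hi => by
    exact osig_congr h (Nat.succ_le_of_lt (lt_of_lt_of_le (Finset.mem_range.1 hi) hj))

lemma sval_congr {g g' : ℕ → ℕ} {k : ℕ} (h : ∀ i < k, g' i = g i) :
    sval g' k = sval g k :=
  Finset.sum_congr rfl fun n hn => by
    rw [Qp_congr h (Nat.succ_le_of_lt (Finset.mem_range.1 hn))]

lemma clen_congr {g g' : ℕ → ℕ} {k : ℕ} (h : ∀ i < k, g' i = g i) :
    clen g' k = clen g k := by
  unfold clen
  rw [Qp_congr h le_rfl, osig_congr h le_rfl]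

lemma update_agree (g : ℕ → ℕ) (k c : ℕ) : ∀ i < k, Function.update g k c i = g i :=
  fun i hi => Function.update_of_ne (by omega) _ _

lemma osig_update {g : ℕ → ℕ} {k j : ℕ} (c : ℕ) (hj : j ≤ k) :
    osig (Function.update g k c) j = osig g j :=
  osig_congr (update_agree g k c) hj

lemma osig_update_succ (g : ℕ → ℕ) (k c : ℕ) :
    osig (Function.update g k c) (k + 1) = osig g k + c := by
  rw [osig_succ, osig_update c le_rfl, Function.update_self]

lemma Qp_update {g : ℕ → ℕ} {k j : ℕ} (c : ℕ) (hj : j ≤ k) :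
    Qp (Function.update g k c) j = Qp g j :=
  Qp_congr (update_agree g k c) hj

lemma Qp_update_succ (g : ℕ → ℕ) (k c : ℕ) :
    Qp (Function.update g k c) (k + 1) = Qp g k * (osig g k + c) := by
  rw [Qp_succ, Qp_update c le_rfl, osig_update_succ]

lemma sval_update (g : ℕ → ℕ) (k c : ℕ) :
    sval (Function.update g k c) k = sval g k :=
  sval_congr (update_agree g k c)

lemma sval_succ (g : ℕ → ℕ) (k : ℕ) :
    sval g (k + 1) = sval g k + (-1 : ℝ) ^ k / Qp g (k + 1) :=
  Finset.sum_range_succ _ _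

lemma clen_update_succ (g : ℕ → ℕ) (k c : ℕ) :
    clen (Function.update g k c) (k + 1) =
      1 / ((Qp g k * (osig g k + c)) * ((osig g k + c) + 1)) := by
  unfold clen
  rw [Qp_update_succ, osig_update_succ]

def SS (a : ℕ → ℕ) (k : ℕ) (g : ℕ → ℕ) : Set ℝ :=
  {x | ∃ g' : ℕ → ℕ, (∀ n, 0 < g' n) ∧ x = bO1inf g' ∧ (∀ n m, g' n ≠ a m) ∧
    (∀ i < k, g' i = g i)}

lemma SS_subset_cball (a : ℕ → ℕ) (k : ℕ) (g : ℕ → ℕ) :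
    SS a k g ⊆ Metric.closedBall (sval g k) (clen g k) := by
  rintro x ⟨g', hpos, rfl, -, hpre⟩
  rw [Metric.mem_closedBall, Real.dist_eq]
  have h := mem_cball hpos k
  rwa [sval_congr hpre, clen_congr hpre] at h

lemma SS_subset_iUnion (a : ℕ → ℕ) (k : ℕ) (g : ℕ → ℕ) :
    SS a k g ⊆ ⋃ c : ℕ, SS a (k + 1) (Function.update g k c) := by
  rintro x ⟨g', h1, h2, h3, h4⟩
  refine Set.mem_iUnion.2 ⟨g' k, g', h1, h2, h3, ?_⟩
  intro i hi
  rcases Nat.lt_succ_iff_lt_or_eq.1 hi with h | h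
  · rw [Function.update_of_ne (by omega), h4 i h]
  · subst h; rw [Function.update_self]

lemma SS_empty (a : ℕ → ℕ) (k : ℕ) (g : ℕ → ℕ) (c : ℕ)
    (hc : ¬(0 < c ∧ ∀ n, c ≠ a n)) : SS a (k + 1) (Function.update g k c) = ∅ := by
  ext x
  simp only [SS, Set.mem_setOf_eq, Set.mem_empty_iff_false, iff_false]
  rintro ⟨g', h1, h2, h3, h4⟩
  have hk : g' k = c := by
    have := h4 k (Nat.lt_succ_self k)
    rwa [Function.update_self] at this
  exact hc ⟨hk ▸ h1 k, fun n => hk ▸ h3 k n⟩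

lemma SS_child_subset (a : ℕ → ℕ) {k : ℕ} {g : ℕ → ℕ} (hpos : ∀ i < k, 0 < g i) (c : ℕ) :
    SS a (k + 1) (Function.update g k c) ⊆ Metric.closedBall (sval g k) (2 / c) := by
  rcases Nat.eq_zero_or_pos c with rfl | hc
  · rw [SS_empty a k g 0 (by simp)]
    exact Set.empty_subset _
  · intro x hx
    have hx' := SS_subset_cball a (k + 1) (Function.update g k c) hx
    rw [Metric.mem_closedBall, Real.dist_eq] at hx' ⊢
    have hQ : (1 : ℝ) ≤ Qp g k := one_le_Qp hpos
    have hm : (0 : ℝ) ≤ osig g k := osig_nonneg g k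
    have hc1 : (1 : ℝ) ≤ c := by exact_mod_cast hc
    set m := osig g k
    have h1 : sval (Function.update g k c) (k + 1) =
        sval g k + (-1 : ℝ) ^ k / (Qp g k * (m + c)) := by
      rw [sval_succ, sval_update, Qp_update_succ]
    have hD : (0 : ℝ) < Qp g k * (m + c) := by nlinarith
    have habs : |sval (Function.update g k c) (k + 1) - sval g k| =
        1 / (Qp g k * (m + c)) := by
      rw [h1]
      rw [add_sub_cancel_left, abs_div, abs_pow, abs_neg, abs_one, one_pow,
        abs_of_pos hD]
    have htri : |x - sval g k| ≤ |x - sval (Function.update g k c) (k + 1)| +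
        |sval (Function.update g k c) (k + 1) - sval g k| := abs_sub_le _ _ _
    have hclen : clen (Function.update g k c) (k + 1) ≤ 1 / (c : ℝ) := by
      rw [clen_update_succ]
      apply one_div_le_one_div_of_le (by exact_mod_cast hc)
      nlinarith
    have hmid : (1 : ℝ) / (Qp g k * (m + c)) ≤ 1 / (c : ℝ) := by
      apply one_div_le_one_div_of_le (by exact_mod_cast hc)
      nlinarith
    have : |x - sval g k| ≤ 1 / (c : ℝ) + 1 / (c : ℝ) := by
      calc |x - sval g k| ≤ |x - sval (Function.update g k c) (k + 1)| +
          |sval (Function.update g k c) (k + 1) - sval g k| := htri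
        _ ≤ clen (Function.update g k c) (k + 1) + 1 / (Qp g k * (m + c)) := by
            rw [habs]; exact add_le_add_left hx' _
        _ ≤ 1 / (c : ℝ) + 1 / (c : ℝ) := add_le_add hclen hmid
    calc |x - sval g k| ≤ 1 / (c : ℝ) + 1 / (c : ℝ) := this
      _ = 2 / (c : ℝ) := by ring

lemma closure_iUnion_subset_aux {A : ℕ → Set ℝ} {p : ℝ} {r : ℕ → ℝ}
    (hA : ∀ c, A c ⊆ Metric.closedBall p (r c)) (hr : Tendsto r atTop (𝓝 0)) :
    closure (⋃ c, A c) ⊆ (⋃ c, closure (A c)) ∪ {p} := by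
  intro x hx
  by_cases hxp : x = p
  · exact Or.inr hxp
  · have hdp : 0 < dist x p := dist_pos.2 hxp
    obtain ⟨N, hN⟩ := (Metric.tendsto_atTop.1 hr (dist x p / 2) (by linarith))
    set C : Set ℝ := (⋃ c ∈ Finset.range N, closure (A c)) ∪
      Metric.closedBall p (dist x p / 2) with hC
    have hCclosed : IsClosed C :=
      (isClosed_biUnion_finset fun i _ => isClosed_closure).union Metric.isClosed_closedBall
    have hsub : (⋃ c, A c) ⊆ C := by
      intro y hy
      obtain ⟨c, hc⟩ := Set.mem_iUnion.1 hy
      by_cases hcN : c < N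
      · exact Or.inl (Set.mem_biUnion (Finset.mem_range.2 hcN) (subset_closure hc))
      · refine Or.inr ?_
        have h1 := hA c hc
        have h2 : r c ≤ dist x p / 2 := by
          have := hN c (le_of_not_gt hcN)
          rw [Real.dist_eq, sub_zero] at this
          exact (le_abs_self _).trans this.le
        exact Metric.closedBall_subset_closedBall h2 h1
    have hxC : x ∈ C := closure_minimal hsub hCclosed hx
    rcases hxC with h | h
    · obtain ⟨c, _, hc2⟩ := Set.mem_iUnion₂.1 h
      exact Or.inl (Set.mem_iUnion.2 ⟨c, hc2⟩)
    · exfalso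
      rw [Metric.mem_closedBall] at h
      linarith

section Key

variable {a : ℕ → ℕ} {d : ℕ}

lemma hasSum_total (m : ℝ) (hm : 0 ≤ m) :
    HasSum (fun c : ℕ => if 0 < c then 1 / ((m + c) * (m + c + 1)) else 0) (1 / (m + 1)) := by
  set f : ℕ → ℝ := fun c => if 0 < c then 1 / ((m + c) * (m + c + 1)) else 0 with hf
  have hnn : ∀ c, 0 ≤ f c := by
    intro c
    simp only [hf]
    split
    · apply one_div_nonneg.2
      have : (0 : ℝ) ≤ (c : ℝ) := Nat.cast_nonneg c
      nlinarith
    · exact le_refl 0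
  rw [hasSum_iff_tendsto_nat_of_nonneg hnn]
  set v : ℕ → ℝ := fun c => if c = 0 then 1 / (m + 1) else 1 / (m + c) with hv
  have hstep : ∀ c, f c = v c - v (c + 1) := by
    intro c
    rcases Nat.eq_zero_or_pos c with rfl | hc
    · simp [hf, hv]
    · have hc' : (1 : ℝ) ≤ c := by exact_mod_cast hc
      have h1 : (0 : ℝ) < m + c := by linarith
      have h2 : (0 : ℝ) < m + c + 1 := by linarith
      simp only [hf, hv, if_pos hc]
      rw [if_neg (by omega), if_neg (by omega)]
      push_cast
      rw [show m + ((c : ℝ) + 1) = m + c + 1 from by ring,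
        div_sub_div _ _ h1.ne' h2.ne']
      congr 1
      ring
  have hpsum : ∀ N, ∑ c ∈ Finset.range N, f c = v 0 - v N := by
    intro N
    rw [Finset.sum_congr rfl (fun c _ => hstep c), Finset.sum_range_sub' v N]
  have hv0 : v 0 = 1 / (m + 1) := by simp [hv]
  have hvlim : Tendsto v atTop (𝓝 0) := by
    apply squeeze_zero' (g := fun N : ℕ => 1 / (N : ℝ)) ?_ ?_ tendsto_one_div_atTop_nhds_zero_nat
    · filter_upwards [eventually_ge_atTop 1] with N hN
      simp only [hv]
      rw [if_neg (by omega)]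
      have : (1 : ℝ) ≤ N := by exact_mod_cast hN
      apply one_div_nonneg.2
      linarith
    · filter_upwards [eventually_ge_atTop 1] with N hN
      simp only [hv]
      rw [if_neg (by omega)]
      have h1 : (1 : ℝ) ≤ N := by exact_mod_cast hN
      exact one_div_le_one_div_of_le (by linarith) (by linarith)
  have hfin : Tendsto (fun N => v 0 - v N) atTop (𝓝 (v 0 - 0)) :=
    tendsto_const_nhds.sub hvlim
  rw [sub_zero, hv0] at hfin
  rw [show (fun N : ℕ => ∑ c ∈ Finset.range N, f c) = fun N => v 0 - v N from funext hpsum]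
  exact hfin

lemma forb_bound (ha : ∀ n, 0 < a n) (hmono : StrictMono a) (hd : 2 ≤ d)
    (hgap : ∀ n, a (n + 1) ≤ a n + d) (m : ℝ) (hm : 0 ≤ m) :
    Summable (fun c : ℕ => if ∃ n, c = a n then 1 / ((m + c) * (m + c + 1)) else 0) ∧
    (1 / (d : ℝ)) * (1 / (m + a 0)) ≤
      ∑' c : ℕ, (if ∃ n, c = a n then 1 / ((m + c) * (m + c + 1)) else 0) := by
  have hd0 : (0 : ℝ) < d := by
    have : (2 : ℝ) ≤ d := by exact_mod_cast hd
    linarith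
  set f : ℕ → ℝ := fun c => if 0 < c then 1 / ((m + c) * (m + c + 1)) else 0 with hf
  set ff : ℕ → ℝ := fun c => if ∃ n, c = a n then 1 / ((m + c) * (m + c + 1)) else 0 with hff
  have hnn : ∀ c, 0 ≤ ff c := by
    intro c
    simp only [hff]
    split
    · apply one_div_nonneg.2
      have : (0 : ℝ) ≤ (c : ℝ) := Nat.cast_nonneg c
      nlinarith
    · exact le_refl 0
  have hle : ∀ c, ff c ≤ f c := by
    intro c
    by_cases hex : ∃ n, c = a n
    · obtain ⟨n, rfl⟩ := hex
      simp only [hff, hf]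
      rw [if_pos ⟨n, rfl⟩, if_pos (ha n)]
    · simp only [hff]
      rw [if_neg hex]
      simp only [hf]
      split
      · apply one_div_nonneg.2
        have : (0 : ℝ) ≤ (c : ℝ) := Nat.cast_nonneg c
        nlinarith
      · exact le_refl 0
  have hsf : Summable f := (hasSum_total m hm).summable
  have hsff : Summable ff := Summable.of_nonneg_of_le hnn hle hsf
  refine ⟨hsff, ?_⟩
  set F : ℕ → ℝ := fun n => (1 / (d : ℝ)) * (1 / (m + a n)) with hF
  have hterm : ∀ n, F n - F (n + 1) ≤ 1 / ((m + a n) * (m + a n + 1)) := by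
    intro n
    have h1 : (1 : ℝ) ≤ a n := by exact_mod_cast ha n
    have h2 : (a n : ℝ) + 1 ≤ a (n + 1) := by
      exact_mod_cast Nat.succ_le_of_lt (hmono (Nat.lt_succ_self n))
    have h3 : (a (n + 1) : ℝ) ≤ a n + d := by exact_mod_cast hgap n
    have hA : (0 : ℝ) < m + a n := by linarith
    have hB : (0 : ℝ) < m + a (n + 1) := by linarith
    have hq : 1 / (m + (a n : ℝ)) - 1 / (m + a (n + 1)) =
        ((m + (a (n + 1) : ℝ)) - (m + a n)) / ((m + a n) * (m + a (n + 1))) := by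
      rw [div_sub_div _ _ hA.ne' hB.ne']
      ring
    have key : (1 / (d : ℝ)) * (1 / (m + a n) - 1 / (m + a (n + 1))) ≤
        1 / ((m + a n) * (m + a n + 1)) := by
      rw [hq]
      have h4 : (m + (a (n + 1) : ℝ)) - (m + a n) ≤ d := by linarith
      have h5 : (m + (a n : ℝ)) * (m + a n + 1) ≤ (m + a n) * (m + a (n + 1)) := by nlinarith
      have h6 : (0 : ℝ) < (m + a n) * (m + a n + 1) := by nlinarith
      have h7 : ((m + (a (n + 1) : ℝ)) - (m + a n)) / ((m + a n) * (m + a (n + 1))) ≤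
          (d : ℝ) / ((m + a n) * (m + a n + 1)) := div_le_div₀ (le_of_lt hd0) h4 h6 h5
      calc (1 / (d : ℝ)) * (((m + (a (n + 1) : ℝ)) - (m + a n)) / ((m + a n) * (m + a (n + 1))))
          ≤ (1 / (d : ℝ)) * ((d : ℝ) / ((m + a n) * (m + a n + 1))) :=
            mul_le_mul_of_nonneg_left h7 (by positivity)
        _ = 1 / ((m + a n) * (m + a n + 1)) := by field_simp
    calc F n - F (n + 1) = (1 / (d : ℝ)) * (1 / (m + a n) - 1 / (m + a (n + 1))) := by
          simp only [hF]; ring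
      _ ≤ 1 / ((m + a n) * (m + a n + 1)) := key
  have htel : ∀ N, F 0 - F N ≤ ∑ n ∈ Finset.range N, 1 / ((m + a n) * (m + a n + 1)) := by
    intro N
    rw [← Finset.sum_range_sub' F N]
    exact Finset.sum_le_sum fun n _ => hterm n
  have himg : ∀ N, ∑ n ∈ Finset.range N, 1 / ((m + a n) * (m + a n + 1)) ≤ ∑' c, ff c := by
    intro N
    have h8 : ∑ c ∈ (Finset.range N).image a, ff c =
        ∑ n ∈ Finset.range N, 1 / ((m + a n) * (m + a n + 1)) := by
      rw [Finset.sum_image (fun x _ y _ h => hmono.injective h)]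
      refine Finset.sum_congr rfl fun n _ => ?_
      simp only [hff]
      rw [if_pos ⟨n, rfl⟩]
    rw [← h8]
    exact Summable.sum_le_tsum _ (fun c _ => hnn c) hsff
  have hFlim : Tendsto (fun N => F 0 - F N) atTop (𝓝 (F 0 - 0)) := by
    apply tendsto_const_nhds.sub
    have hg0 : Tendsto (fun N : ℕ => (1 / (d : ℝ)) * (1 / (N : ℝ))) atTop (𝓝 0) := by
      have := tendsto_one_div_atTop_nhds_zero_nat.const_mul (1 / (d : ℝ))
      simpa using this
    apply squeeze_zero' ?_ ?_ hg0
    · filter_upwards with N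
      simp only [hF]
      have h1 : (1 : ℝ) ≤ a N := by exact_mod_cast ha N
      have : (0 : ℝ) < m + a N := by linarith
      positivity
    · filter_upwards [eventually_ge_atTop 1] with N hN
      simp only [hF]
      have h1 : (N : ℝ) ≤ a N := by exact_mod_cast hmono.le_apply
      have h2 : (1 : ℝ) ≤ N := by exact_mod_cast hN
      apply mul_le_mul_of_nonneg_left _ (by positivity)
      exact one_div_le_one_div_of_le (by linarith) (by linarith)
  rw [sub_zero] at hFlim
  have hfinal : F 0 ≤ ∑' c, ff c :=
    le_of_tendsto' hFlim fun N => (htel N).trans (himg N)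
  simpa [hF] using hfinal

lemma allowed_bound (ha : ∀ n, 0 < a n) (hmono : StrictMono a) (hd : 2 ≤ d)
    (hgap : ∀ n, a (n + 1) ≤ a n + d) (m : ℝ) (hm : 0 ≤ m) :
    Summable (fun c : ℕ => if 0 < c ∧ ∀ n, c ≠ a n then 1 / ((m + c) * (m + c + 1)) else 0) ∧
    ∑' c : ℕ, (if 0 < c ∧ ∀ n, c ≠ a n then 1 / ((m + c) * (m + c + 1)) else 0) ≤
      (1 - 1 / ((d : ℝ) * a 0)) * (1 / (m + 1)) := by
  obtain ⟨hsff, hffb⟩ := forb_bound ha hmono hd hgap m hm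
  have hsf : Summable (fun c : ℕ => if 0 < c then 1 / ((m + c) * (m + c + 1)) else 0) :=
    (hasSum_total m hm).summable
  have htf : ∑' c : ℕ, (if 0 < c then 1 / ((m + c) * (m + c + 1)) else 0) = 1 / (m + 1) :=
    (hasSum_total m hm).tsum_eq
  have hpt : (fun c : ℕ => if 0 < c ∧ ∀ n, c ≠ a n then 1 / ((m + c) * (m + c + 1)) else 0) =
      fun c : ℕ => (if 0 < c then 1 / ((m + c) * (m + c + 1)) else 0) -
        (if ∃ n, c = a n then 1 / ((m + c) * (m + c + 1)) else 0) := by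
    funext c
    by_cases h1 : 0 < c
    · by_cases h2 : ∃ n, c = a n
      · rw [if_neg, if_pos h1, if_pos h2]
        · ring
        · rintro ⟨-, hall⟩
          obtain ⟨n, rfl⟩ := h2
          exact hall n rfl
      · rw [if_pos ⟨h1, fun n hn => h2 ⟨n, hn⟩⟩, if_pos h1, if_neg h2]
        ring
    · rw [if_neg (fun h => h1 h.1), if_neg h1, if_neg]
      · ring
      · rintro ⟨n, hn⟩
        have hc0 : c = 0 := by omega
        subst hc0
        exact (ha n).ne' hn.symm
  constructor
  · rw [hpt]
    exact hsf.sub hsff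
  · rw [hpt, Summable.tsum_sub hsf hsff, htf]
    have ha0 : (1 : ℝ) ≤ a 0 := by exact_mod_cast ha 0
    have hd2 : (2 : ℝ) ≤ d := by exact_mod_cast hd
    have h1 : (1 / ((d : ℝ) * a 0)) * (1 / (m + 1)) ≤ (1 / (d : ℝ)) * (1 / (m + a 0)) := by
      rw [div_mul_div_comm, div_mul_div_comm, one_mul]
      apply one_div_le_one_div_of_le (by nlinarith)
      nlinarith [mul_nonneg (mul_nonneg (by linarith : (0:ℝ) ≤ (d : ℝ))
        (sub_nonneg.2 ha0)) hm]
    have h2 : (1 / ((d : ℝ) * a 0)) * (1 / (m + 1)) ≤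
        ∑' c : ℕ, (if ∃ n, c = a n then 1 / ((m + c) * (m + c + 1)) else 0) :=
      le_trans h1 hffb
    have hx : (1 - 1 / ((d : ℝ) * a 0)) * (1 / (m + 1)) =
        1 / (m + 1) - (1 / ((d : ℝ) * a 0)) * (1 / (m + 1)) := by ring
    rw [hx]
    linarith

lemma child_clen_bound (ha : ∀ n, 0 < a n) (hmono : StrictMono a) (hd : 2 ≤ d)
    (hgap : ∀ n, a (n + 1) ≤ a n + d) {k : ℕ} {g : ℕ → ℕ} (hpos : ∀ i < k, 0 < g i) :
    Summable (fun c : ℕ => if 0 < c ∧ ∀ n, c ≠ a n then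
      clen (Function.update g k c) (k + 1) else 0) ∧
    ∑' c : ℕ, (if 0 < c ∧ ∀ n, c ≠ a n then clen (Function.update g k c) (k + 1) else 0) ≤
      (1 - 1 / ((d : ℝ) * a 0)) * clen g k := by
  have hm : (0 : ℝ) ≤ osig g k := osig_nonneg g k
  have hQ : (1 : ℝ) ≤ Qp g k := one_le_Qp hpos
  have hQ0 : (0 : ℝ) < Qp g k := by linarith
  set m := osig g k with hmdef
  have hfe : (fun c : ℕ => if 0 < c ∧ ∀ n, c ≠ a n then
      clen (Function.update g k c) (k + 1) else 0) =
      fun c : ℕ => (1 / Qp g k) *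
        (if 0 < c ∧ ∀ n, c ≠ a n then 1 / ((m + c) * (m + c + 1)) else 0) := by
    funext c
    split_ifs with h
    · rw [clen_update_succ]
      rw [show (Qp g k * (m + c)) * ((m + c) + 1) = Qp g k * ((m + c) * (m + c + 1)) from by ring,
        ← one_div_mul_one_div]
    · rw [mul_zero]
  obtain ⟨hsal, hal⟩ := allowed_bound ha hmono hd hgap m hm
  constructor
  · rw [hfe]
    exact hsal.mul_left _
  · rw [hfe, tsum_mul_left]
    have hclen : clen g k = (1 / Qp g k) * (1 / (m + 1)) := by
      unfold clen
      rw [← one_div_mul_one_div]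
    calc (1 / Qp g k) *
        (∑' c : ℕ, if 0 < c ∧ ∀ n, c ≠ a n then 1 / ((m + c) * (m + c + 1)) else 0)
        ≤ (1 / Qp g k) * ((1 - 1 / ((d : ℝ) * a 0)) * (1 / (m + 1))) :=
          mul_le_mul_of_nonneg_left hal (by positivity)
      _ = (1 - 1 / ((d : ℝ) * a 0)) * clen g k := by rw [hclen]; ring

lemma main_bound (ha : ∀ n, 0 < a n) (hmono : StrictMono a) (hd : 2 ≤ d)
    (hgap : ∀ n, a (n + 1) ≤ a n + d) :
    ∀ (j k : ℕ) (g : ℕ → ℕ), (∀ i < k, 0 < g i) →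
      volume (closure (SS a k g)) ≤
        ENNReal.ofReal ((1 - 1 / ((d : ℝ) * a 0)) ^ j * (2 * clen g k)) := by
  have ha0 : (1 : ℝ) ≤ a 0 := by exact_mod_cast ha 0
  have hd2 : (2 : ℝ) ≤ d := by exact_mod_cast hd
  have hδ0 : 0 < 1 / ((d : ℝ) * a 0) := by positivity
  have hδ1 : 1 / ((d : ℝ) * a 0) ≤ 1 / 2 := by
    apply one_div_le_one_div_of_le (by norm_num)
    nlinarith
  have hβ0 : (0 : ℝ) ≤ 1 - 1 / ((d : ℝ) * a 0) := by linarith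
  intro j
  induction j with
  | zero =>
    intro k g hpos
    calc volume (closure (SS a k g))
        ≤ volume (Metric.closedBall (sval g k) (clen g k)) :=
          measure_mono (closure_minimal (SS_subset_cball a k g) Metric.isClosed_closedBall)
      _ = ENNReal.ofReal (2 * clen g k) := Real.volume_closedBall _ _
      _ = ENNReal.ofReal ((1 - 1 / ((d : ℝ) * a 0)) ^ 0 * (2 * clen g k)) := by
          rw [pow_zero, one_mul]
  | succ j ih =>
    intro k g hpos
    have htend : Tendsto (fun c : ℕ => 2 / (c : ℝ)) atTop (𝓝 0) := by
      have := tendsto_one_div_atTop_nhds_zero_nat.const_mul (2 : ℝ)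
      simpa [mul_one_div, div_eq_mul_inv] using this
    have hsub : closure (SS a k g) ⊆
        (⋃ c : ℕ, closure (SS a (k + 1) (Function.update g k c))) ∪ {sval g k} :=
      (closure_mono (SS_subset_iUnion a k g)).trans
        (closure_iUnion_subset_aux (fun c => SS_child_subset a hpos c) htend)
    obtain ⟨hsch, hch⟩ := child_clen_bound ha hmono hd hgap hpos
    have hnn2 : ∀ c : ℕ, 0 ≤ (if 0 < c ∧ ∀ n, c ≠ a n then
        (1 - 1 / ((d : ℝ) * a 0)) ^ j * (2 * clen (Function.update g k c) (k + 1)) else 0) := by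
      intro c
      split
      · have := clen_nonneg (Function.update g k c) (k + 1)
        positivity
      · exact le_refl 0
    have hfe2 : (fun c : ℕ => if 0 < c ∧ ∀ n, c ≠ a n then
        (1 - 1 / ((d : ℝ) * a 0)) ^ j * (2 * clen (Function.update g k c) (k + 1)) else 0) =
        fun c : ℕ => ((1 - 1 / ((d : ℝ) * a 0)) ^ j * 2) *
          (if 0 < c ∧ ∀ n, c ≠ a n then clen (Function.update g k c) (k + 1) else 0) := by
      funext c
      split_ifs with h
      · ring
      · rw [mul_zero]
    have hsum2 : Summable (fun c : ℕ => if 0 < c ∧ ∀ n, c ≠ a n then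
        (1 - 1 / ((d : ℝ) * a 0)) ^ j * (2 * clen (Function.update g k c) (k + 1)) else 0) := by
      rw [hfe2]
      exact hsch.mul_left _
    calc volume (closure (SS a k g))
        ≤ volume ((⋃ c : ℕ, closure (SS a (k + 1) (Function.update g k c))) ∪ {sval g k}) :=
          measure_mono hsub
      _ ≤ volume (⋃ c : ℕ, closure (SS a (k + 1) (Function.update g k c))) +
          volume ({sval g k} : Set ℝ) := measure_union_le _ _
      _ = volume (⋃ c : ℕ, closure (SS a (k + 1) (Function.update g k c))) := by
          rw [Real.volume_singleton, add_zero]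
      _ ≤ ∑' c : ℕ, volume (closure (SS a (k + 1) (Function.update g k c))) :=
          measure_iUnion_le _
      _ ≤ ∑' c : ℕ, ENNReal.ofReal (if 0 < c ∧ ∀ n, c ≠ a n then
            (1 - 1 / ((d : ℝ) * a 0)) ^ j * (2 * clen (Function.update g k c) (k + 1)) else 0) := by
          apply ENNReal.tsum_le_tsum
          intro c
          by_cases hc : 0 < c ∧ ∀ n, c ≠ a n
          · rw [if_pos hc]
            apply ih (k + 1) (Function.update g k c)
            intro i hi
            rcases Nat.lt_succ_iff_lt_or_eq.1 hi with h | h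
            · rw [Function.update_of_ne (by omega)]
              exact hpos i h
            · subst h
              rw [Function.update_self]
              exact hc.1
          · rw [if_neg hc, SS_empty a k g c hc, closure_empty, measure_empty]
            exact zero_le
      _ = ENNReal.ofReal (∑' c : ℕ, if 0 < c ∧ ∀ n, c ≠ a n then
            (1 - 1 / ((d : ℝ) * a 0)) ^ j * (2 * clen (Function.update g k c) (k + 1)) else 0) :=
          (ENNReal.ofReal_tsum_of_nonneg hnn2 hsum2).symm
      _ ≤ ENNReal.ofReal ((1 - 1 / ((d : ℝ) * a 0)) ^ (j + 1) * (2 * clen g k)) := by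
          apply ENNReal.ofReal_le_ofReal
          rw [hfe2, tsum_mul_left]
          calc ((1 - 1 / ((d : ℝ) * a 0)) ^ j * 2) *
              (∑' c : ℕ, if 0 < c ∧ ∀ n, c ≠ a n then
                clen (Function.update g k c) (k + 1) else 0)
              ≤ ((1 - 1 / ((d : ℝ) * a 0)) ^ j * 2) *
                ((1 - 1 / ((d : ℝ) * a 0)) * clen g k) := by
                apply mul_le_mul_of_nonneg_left hch
                positivity
            _ = (1 - 1 / ((d : ℝ) * a 0)) ^ (j + 1) * (2 * clen g k) := by ring

lemma volume_closure_SS_zero (ha : ∀ n, 0 < a n) (hmono : StrictMono a) (hd : 2 ≤ d)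
    (hgap : ∀ n, a (n + 1) ≤ a n + d) :
    volume (closure (SS a 0 (fun _ => 1))) = 0 := by
  have ha0 : (1 : ℝ) ≤ a 0 := by exact_mod_cast ha 0
  have hd2 : (2 : ℝ) ≤ d := by exact_mod_cast hd
  have hδ0 : 0 < 1 / ((d : ℝ) * a 0) := by positivity
  have hδ1 : 1 / ((d : ℝ) * a 0) ≤ 1 / 2 := by
    apply one_div_le_one_div_of_le (by norm_num)
    nlinarith
  have hβ0 : (0 : ℝ) ≤ 1 - 1 / ((d : ℝ) * a 0) := by linarith
  have hβ1 : (1 - 1 / ((d : ℝ) * a 0)) < 1 := by linarith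
  have hclen1 : clen (fun _ => 1) 0 = 1 := by
    unfold clen Qp osig
    simp
  have hb : ∀ j, volume (closure (SS a 0 (fun _ => 1))) ≤
      ENNReal.ofReal ((1 - 1 / ((d : ℝ) * a 0)) ^ j * 2) := by
    intro j
    have h := main_bound ha hmono hd hgap j 0 (fun _ => 1) (by intro i hi; omega)
    rwa [hclen1, mul_one] at h
  have hlim : Tendsto (fun j : ℕ => ENNReal.ofReal ((1 - 1 / ((d : ℝ) * a 0)) ^ j * 2))
      atTop (𝓝 0) := by
    have h1 : Tendsto (fun j : ℕ => (1 - 1 / ((d : ℝ) * a 0)) ^ j * 2) atTop (𝓝 0) := by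
      have := (tendsto_pow_atTop_nhds_zero_of_lt_one hβ0 hβ1).mul_const (2 : ℝ)
      simpa using this
    have h2 := (ENNReal.continuous_ofReal.tendsto 0).comp h1
    simpa [Function.comp_def] using h2
  exact le_antisymm (ge_of_tendsto' hlim hb) zero_le

end Key

end O1CV

/-- Theorem 7: if `(a_n)` is an increasing sequence of positive integers
with gaps `a_{n+1} − a_n ≤ d` (for some fixed `d ≥ 2`), and `V = ℕ \ {a_1, a_2, …}`, then
the set `C[V]` of `x ∈ [0,1]` all of whose O¹-symbols avoid every `a_n` has Lebesgue
measure `0`. In particular this holds when `V` is the set of odd (resp. even) positive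
integers. -/
theorem o1_CV_complement_of_bounded_gaps_null
    (a : ℕ → ℕ) (ha : ∀ n, 0 < a n) (hmono : StrictMono a)
    (d : ℕ) (hd : 2 ≤ d) (hgap : ∀ n, a (n + 1) ≤ a n + d) :
    volume (closure {x : ℝ | x ∈ Set.Icc (0 : ℝ) 1 ∧ ∃ g : ℕ → ℕ, (∀ n, 0 < g n) ∧
      x = bO1inf g ∧ ∀ n k, g n ≠ a k}) = 0 ∧
    volume (closure {x : ℝ | x ∈ Set.Icc (0 : ℝ) 1 ∧ ∃ g : ℕ → ℕ, (∀ n, 0 < g n) ∧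
      x = bO1inf g ∧ ∀ n, Odd (g n)}) = 0 ∧
    volume (closure {x : ℝ | x ∈ Set.Icc (0 : ℝ) 1 ∧ ∃ g : ℕ → ℕ, (∀ n, 0 < g n) ∧
      x = bO1inf g ∧ ∀ n, Even (g n)}) = 0 := by
  have key : ∀ (b : ℕ → ℕ), (∀ n, 0 < b n) → StrictMono b → ∀ e : ℕ, 2 ≤ e →
      (∀ n, b (n + 1) ≤ b n + e) →
      ∀ S : Set ℝ, (S ⊆ O1CV.SS b 0 (fun _ => 1)) → volume (closure S) = 0 := by
    intro b hb hbmono e he hegap S hS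
    have h0 := O1CV.volume_closure_SS_zero (a := b) (d := e) hb hbmono he hegap
    have h1 : volume (closure S) ≤ volume (closure (O1CV.SS b 0 (fun _ => 1))) :=
      measure_mono (closure_mono hS)
    rw [h0] at h1
    exact le_antisymm h1 zero_le
  refine ⟨?_, ?_, ?_⟩
  · apply key a ha hmono d hd hgap
    rintro x ⟨-, g, h1, h2, h3⟩
    exact ⟨g, h1, h2, h3, fun i hi => absurd hi (by omega)⟩
  · apply key (fun k => 2 * k + 2) (fun n => by show 0 < 2 * n + 2; omega)
      (strictMono_nat_of_lt_succ fun n => by show 2 * n + 2 < 2 * (n + 1) + 2; omega) 2 le_rfl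
      (fun n => by show 2 * (n + 1) + 2 ≤ 2 * n + 2 + 2; omega)
    rintro x ⟨-, g, h1, h2, h3⟩
    refine ⟨g, h1, h2, ?_, fun i hi => absurd hi (by omega)⟩
    intro n k
    show g n ≠ 2 * k + 2
    obtain ⟨t, ht⟩ := h3 n
    omega
  · apply key (fun k => 2 * k + 1) (fun n => by show 0 < 2 * n + 1; omega)
      (strictMono_nat_of_lt_succ fun n => by show 2 * n + 1 < 2 * (n + 1) + 1; omega) 2 le_rfl
      (fun n => by show 2 * (n + 1) + 1 ≤ 2 * n + 1 + 2; omega)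
    rintro x ⟨-, g, h1, h2, h3⟩
    refine ⟨g, h1, h2, ?_, fun i hi => absurd hi (by omega)⟩
    intro n k
    show g n ≠ 2 * k + 1
    obtain ⟨t, ht⟩ := h3 n
    omega
end
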